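/- Let C, R be real constants with R² > 4C², and set Q = √(R² - 4C²). Then the functions α(r) = 2RQ²e^{-rQ}/((e^{-rQ}R - 2C)² + Q²), l(r) = R²Q(e^{-2rQ} - 1)/((e^{-rQ}R - 2C)² + Q²), θ(r) = 2·arctan((2C - e^{-rQ}R)/Q) satisfy l' = -α² + 2Cα, α' = αl, and θ' = α. -/

import Mathlib

theorem cy_soliton_Q_pos (C R : ℝ) (hR : R^2 > 4*C^2) :
    let Q : ℝ := Real.sqrt (R^2 - 4*C^2)
    let α : ℝ → ℝ := fun r =>
      2*R*Q^2*Real.exp (-r*Q) / ((Real.exp (-r*Q)*R - 2*C)^2 + Q^2)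
    let l : ℝ → ℝ := fun r =>
      R^2*Q*(Real.exp (-2*r*Q) - 1) / ((Real.exp (-r*Q)*R - 2*C)^2 + Q^2)
    let θ : ℝ → ℝ := fun r => 2 * Real.arctan ((2*C - Real.exp (-r*Q)*R)/Q)
    ∀ r, deriv l r = -(α r)^2 + 2*C*(α r) ∧
      deriv α r = α r * l r ∧
      deriv θ r = α r := by
  intro Q α l θ r
  have hQ2 : Q^2 = R^2 - 4*C^2 := Real.sq_sqrt (by linarith)
  have hQpos : 0 < Q := Real.sqrt_pos.mpr (by linarith)
  have hQne : Q ≠ 0 := ne_of_gt hQpos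
  have hEpos : 0 < Real.exp (-r*Q) := Real.exp_pos _
  set E : ℝ := Real.exp (-r*Q) with hE
  have hDpos : 0 < (E*R - 2*C)^2 + Q^2 := by positivity
  have hDne : (E*R - 2*C)^2 + Q^2 ≠ 0 := ne_of_gt hDpos
  have hE2 : Real.exp (-2*r*Q) = E^2 := by
    rw [hE, sq, ← Real.exp_add]; ring_nf
  have hin1 : HasDerivAt (fun x : ℝ => -x*Q) (-Q) r := by
    simpa using ((hasDerivAt_id r).neg.mul_const Q)
  have hEd : HasDerivAt (fun x : ℝ => Real.exp (-x*Q)) (E * -Q) r := hin1.exp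
  have hin2 : HasDerivAt (fun x : ℝ => -2*x*Q) (-2*Q) r := by
    simpa using (((hasDerivAt_id r).const_mul (-2)).mul_const Q)
  have hE2d : HasDerivAt (fun x : ℝ => Real.exp (-2*x*Q)) (E^2 * (-2*Q)) r := by
    have := hin2.exp
    rwa [hE2] at this
  have hDd := (((hEd.mul_const R).sub_const (2*C)).pow 2).add_const (Q^2)
  have hq : Q^2 - R^2 + 4*C^2 = 0 := by linarith
  have hld := ((hE2d.const_mul (R^2*Q)).sub_const (R^2*Q)).div hDd hDne
  have hαd := ((hEd.const_mul (2*R*Q^2))).div hDd hDne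
  have hud := ((hEd.mul_const R).const_sub (2*C)).div_const Q
  have h1u : 0 < 1 + ((2*C - E*R)/Q)^2 := by positivity
  have hθd := (hud.arctan).const_mul 2
  refine ⟨?_, ?_, ?_⟩
  · show deriv (fun r => R^2*Q*(Real.exp (-2*r*Q) - 1) / ((Real.exp (-r*Q)*R - 2*C)^2 + Q^2)) r = _
    rw [show (fun r => R^2*Q*(Real.exp (-2*r*Q) - 1) / ((Real.exp (-r*Q)*R - 2*C)^2 + Q^2))
      = (fun r => (R^2*Q*Real.exp (-2*r*Q) - R^2*Q) / ((Real.exp (-r*Q)*R - 2*C)^2 + Q^2)) from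
      funext fun x => by ring_nf]
    rw [show deriv (fun r => (R^2*Q*Real.exp (-2*r*Q) - R^2*Q) / ((Real.exp (-r*Q)*R - 2*C)^2 + Q^2)) r = _ from hld.deriv]
    show _ = -(α r)^2 + 2*C*(α r)
    simp only [α, Pi.pow_apply, ← hE, hE2]
    field_simp
    linear_combination (2*R^2*E - 4*R*C) * hq
  · show deriv (fun r => 2*R*Q^2*Real.exp (-r*Q) / ((Real.exp (-r*Q)*R - 2*C)^2 + Q^2)) r = _
    rw [show deriv (fun r => 2*R*Q^2*Real.exp (-r*Q) / ((Real.exp (-r*Q)*R - 2*C)^2 + Q^2)) r = _ from hαd.deriv]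
    show _ = α r * l r
    simp only [α, l, Pi.pow_apply, ← hE, hE2]
    field_simp
    linear_combination (-R) * hq
  · show deriv (fun r => 2 * Real.arctan ((2*C - Real.exp (-r*Q)*R)/Q)) r = _
    rw [hθd.deriv]
    show _ = α r
    simp only [α, ← hE]
    have h1une : (1 + ((2*C - E*R)/Q)^2) ≠ 0 := ne_of_gt h1u
    field_simp
    ring
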